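/- arXiv:2006.08293 — 3 statements merged into one kernel-verified Lean document; each statement's English description precedes it below -/
import Mathlib

section
/- Let G(x,y,t) = ((x²+y²)² + 16t²)^{-1/2} and let Δ♭ = X² + Y² be the Kohn Laplacian, where X = ∂_x - (y/2)∂_t and Y = ∂_y + (x/2)∂_t. Then Δ♭G(p) = 0 for every p ∈ ℝ³ with p ≠ 0. -/
noncomputable section

def pdx (f : ℝ × ℝ × ℝ → ℝ) (p : ℝ × ℝ × ℝ) : ℝ :=
  deriv (fun s => f (s, p.2.1, p.2.2)) p.1

def pdy (f : ℝ × ℝ × ℝ → ℝ) (p : ℝ × ℝ × ℝ) : ℝ :=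
  deriv (fun s => f (p.1, s, p.2.2)) p.2.1

def pdt (f : ℝ × ℝ × ℝ → ℝ) (p : ℝ × ℝ × ℝ) : ℝ :=
  deriv (fun s => f (p.1, p.2.1, s)) p.2.2

/-- Left-invariant `X = ∂ₓ - (y/2)∂_t`. -/
def Xop (f : ℝ × ℝ × ℝ → ℝ) (p : ℝ × ℝ × ℝ) : ℝ :=
  pdx f p - p.2.1 / 2 * pdt f p

/-- Left-invariant `Y = ∂_y + (x/2)∂_t`. -/
def Yop (f : ℝ × ℝ × ℝ → ℝ) (p : ℝ × ℝ × ℝ) : ℝ :=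
  pdy f p + p.1 / 2 * pdt f p

/-- Folland's fundamental solution (up to a constant): `G(x,y,t) = ((x²+y²)² + 16t²)^{-1/2}`. -/
def G (p : ℝ × ℝ × ℝ) : ℝ :=
  ((p.1 ^ 2 + p.2.1 ^ 2) ^ 2 + 16 * p.2.2 ^ 2) ^ (-(1 : ℝ) / 2)

/-! ### Auxiliary machinery -/

/-- closed form of `XG` -/
def Af (q : ℝ × ℝ × ℝ) : ℝ :=
  (-2 * q.1 * (q.1 ^ 2 + q.2.1 ^ 2) + 8 * q.2.1 * q.2.2) *
    ((q.1 ^ 2 + q.2.1 ^ 2) ^ 2 + 16 * q.2.2 ^ 2) ^ (-(3 : ℝ) / 2)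

/-- closed form of `YG` -/
def Bf (q : ℝ × ℝ × ℝ) : ℝ :=
  (-2 * q.2.1 * (q.1 ^ 2 + q.2.1 ^ 2) - 8 * q.1 * q.2.2) *
    ((q.1 ^ 2 + q.2.1 ^ 2) ^ 2 + 16 * q.2.2 ^ 2) ^ (-(3 : ℝ) / 2)

lemma hdw_x (x y t : ℝ) :
    HasDerivAt (fun s : ℝ => (s ^ 2 + y ^ 2) ^ 2 + 16 * t ^ 2) (4 * x * (x ^ 2 + y ^ 2)) x := by
  have h1 : HasDerivAt (fun s : ℝ => s ^ 2 + y ^ 2) (2 * x) x := by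
    simpa using (hasDerivAt_pow 2 x).add_const (y ^ 2)
  have h2 := (h1.pow 2).add_const (16 * t ^ 2)
  refine h2.congr_deriv ?_
  push_cast
  ring

lemma hdw_y (x y t : ℝ) :
    HasDerivAt (fun s : ℝ => (x ^ 2 + s ^ 2) ^ 2 + 16 * t ^ 2) (4 * y * (x ^ 2 + y ^ 2)) y := by
  have h1 : HasDerivAt (fun s : ℝ => x ^ 2 + s ^ 2) (2 * y) y := by
    simpa using (hasDerivAt_pow 2 y).const_add (x ^ 2)
  have h2 := (h1.pow 2).add_const (16 * t ^ 2)
  refine h2.congr_deriv ?_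
  push_cast
  ring

lemma hdw_t (x y t : ℝ) :
    HasDerivAt (fun s : ℝ => (x ^ 2 + y ^ 2) ^ 2 + 16 * s ^ 2) (32 * t) t := by
  have h1 := (hasDerivAt_pow 2 t).const_mul (16 : ℝ)
  have h2 := h1.const_add ((x ^ 2 + y ^ 2) ^ 2)
  refine h2.congr_deriv ?_
  push_cast
  ring

lemma exp_eq1 : (-(1 : ℝ) / 2 - 1) = -(3 : ℝ) / 2 := by norm_num

lemma exp_eq3 : (-(3 : ℝ) / 2 - 1) = -(5 : ℝ) / 2 := by norm_num

lemma pdx_G (x y t : ℝ) (h : (x ^ 2 + y ^ 2) ^ 2 + 16 * t ^ 2 ≠ 0) :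
    pdx G (x, y, t) =
      -2 * x * (x ^ 2 + y ^ 2) * ((x ^ 2 + y ^ 2) ^ 2 + 16 * t ^ 2) ^ (-(3 : ℝ) / 2) := by
  have hd := (hdw_x x y t).rpow_const (p := -(1 : ℝ) / 2) (Or.inl h)
  show deriv (fun s => G (s, y, t)) x = _
  rw [show (fun s => G (s, y, t)) =
      (fun s : ℝ => ((s ^ 2 + y ^ 2) ^ 2 + 16 * t ^ 2) ^ (-(1 : ℝ) / 2)) from rfl,
    hd.deriv, exp_eq1]
  ring

lemma pdy_G (x y t : ℝ) (h : (x ^ 2 + y ^ 2) ^ 2 + 16 * t ^ 2 ≠ 0) :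
    pdy G (x, y, t) =
      -2 * y * (x ^ 2 + y ^ 2) * ((x ^ 2 + y ^ 2) ^ 2 + 16 * t ^ 2) ^ (-(3 : ℝ) / 2) := by
  have hd := (hdw_y x y t).rpow_const (p := -(1 : ℝ) / 2) (Or.inl h)
  show deriv (fun s => G (x, s, t)) y = _
  rw [show (fun s => G (x, s, t)) =
      (fun s : ℝ => ((x ^ 2 + s ^ 2) ^ 2 + 16 * t ^ 2) ^ (-(1 : ℝ) / 2)) from rfl,
    hd.deriv, exp_eq1]
  ring

lemma pdt_G (x y t : ℝ) (h : (x ^ 2 + y ^ 2) ^ 2 + 16 * t ^ 2 ≠ 0) :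
    pdt G (x, y, t) =
      -16 * t * ((x ^ 2 + y ^ 2) ^ 2 + 16 * t ^ 2) ^ (-(3 : ℝ) / 2) := by
  have hd := (hdw_t x y t).rpow_const (p := -(1 : ℝ) / 2) (Or.inl h)
  show deriv (fun s => G (x, y, s)) t = _
  rw [show (fun s => G (x, y, s)) =
      (fun s : ℝ => ((x ^ 2 + y ^ 2) ^ 2 + 16 * s ^ 2) ^ (-(1 : ℝ) / 2)) from rfl,
    hd.deriv, exp_eq1]
  ring

lemma XG_eq (x y t : ℝ) (h : (x ^ 2 + y ^ 2) ^ 2 + 16 * t ^ 2 ≠ 0) :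
    Xop G (x, y, t) = Af (x, y, t) := by
  show pdx G (x, y, t) - y / 2 * pdt G (x, y, t) = _
  rw [pdx_G x y t h, pdt_G x y t h]
  show _ = (-2 * x * (x ^ 2 + y ^ 2) + 8 * y * t) *
    ((x ^ 2 + y ^ 2) ^ 2 + 16 * t ^ 2) ^ (-(3 : ℝ) / 2)
  ring

lemma YG_eq (x y t : ℝ) (h : (x ^ 2 + y ^ 2) ^ 2 + 16 * t ^ 2 ≠ 0) :
    Yop G (x, y, t) = Bf (x, y, t) := by
  show pdy G (x, y, t) + x / 2 * pdt G (x, y, t) = _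
  rw [pdy_G x y t h, pdt_G x y t h]
  show _ = (-2 * y * (x ^ 2 + y ^ 2) - 8 * x * t) *
    ((x ^ 2 + y ^ 2) ^ 2 + 16 * t ^ 2) ^ (-(3 : ℝ) / 2)
  ring

lemma pdx_Af (x y t : ℝ) (h : (x ^ 2 + y ^ 2) ^ 2 + 16 * t ^ 2 ≠ 0) :
    pdx Af (x, y, t) =
      (-6 * x ^ 2 - 2 * y ^ 2) * ((x ^ 2 + y ^ 2) ^ 2 + 16 * t ^ 2) ^ (-(3 : ℝ) / 2) +
      (-2 * x * (x ^ 2 + y ^ 2) + 8 * y * t) * (-6 * x * (x ^ 2 + y ^ 2)) *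
        ((x ^ 2 + y ^ 2) ^ 2 + 16 * t ^ 2) ^ (-(5 : ℝ) / 2) := by
  have h1 : HasDerivAt (fun s : ℝ => s ^ 2 + y ^ 2) (2 * x) x := by
    simpa using (hasDerivAt_pow 2 x).add_const (y ^ 2)
  have h2 : HasDerivAt (fun s : ℝ => -2 * s) (-2) x := by
    simpa using (hasDerivAt_id x).const_mul (-2)
  have hP : HasDerivAt (fun s : ℝ => -2 * s * (s ^ 2 + y ^ 2) + 8 * y * t)
      (-6 * x ^ 2 - 2 * y ^ 2) x := by
    have := (h2.mul h1).add_const (8 * y * t)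
    refine this.congr_deriv ?_; ring
  have hW := (hdw_x x y t).rpow_const (p := -(3 : ℝ) / 2) (Or.inl h)
  have hA := hP.mul hW
  simp only [Pi.mul_def] at hA
  show deriv (fun s => Af (s, y, t)) x = _
  rw [show (fun s => Af (s, y, t)) =
      (fun s : ℝ => (-2 * s * (s ^ 2 + y ^ 2) + 8 * y * t) *
        ((s ^ 2 + y ^ 2) ^ 2 + 16 * t ^ 2) ^ (-(3 : ℝ) / 2)) from rfl,
    hA.deriv, exp_eq3]
  ring

lemma pdt_Af (x y t : ℝ) (h : (x ^ 2 + y ^ 2) ^ 2 + 16 * t ^ 2 ≠ 0) :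
    pdt Af (x, y, t) =
      8 * y * ((x ^ 2 + y ^ 2) ^ 2 + 16 * t ^ 2) ^ (-(3 : ℝ) / 2) +
      (-2 * x * (x ^ 2 + y ^ 2) + 8 * y * t) * (-48 * t) *
        ((x ^ 2 + y ^ 2) ^ 2 + 16 * t ^ 2) ^ (-(5 : ℝ) / 2) := by
  have hid : HasDerivAt (fun s : ℝ => 8 * y * s) (8 * y) t := by
    simpa using (hasDerivAt_id t).const_mul (8 * y)
  have hP := hid.const_add (-2 * x * (x ^ 2 + y ^ 2))
  have hW := (hdw_t x y t).rpow_const (p := -(3 : ℝ) / 2) (Or.inl h)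
  have hA := hP.mul hW
  simp only [Pi.mul_def] at hA
  show deriv (fun s => Af (x, y, s)) t = _
  rw [show (fun s => Af (x, y, s)) =
      (fun s : ℝ => (-2 * x * (x ^ 2 + y ^ 2) + 8 * y * s) *
        ((x ^ 2 + y ^ 2) ^ 2 + 16 * s ^ 2) ^ (-(3 : ℝ) / 2)) from rfl,
    hA.deriv, exp_eq3]
  ring

lemma pdy_Bf (x y t : ℝ) (h : (x ^ 2 + y ^ 2) ^ 2 + 16 * t ^ 2 ≠ 0) :
    pdy Bf (x, y, t) =
      (-2 * x ^ 2 - 6 * y ^ 2) * ((x ^ 2 + y ^ 2) ^ 2 + 16 * t ^ 2) ^ (-(3 : ℝ) / 2) +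
      (-2 * y * (x ^ 2 + y ^ 2) - 8 * x * t) * (-6 * y * (x ^ 2 + y ^ 2)) *
        ((x ^ 2 + y ^ 2) ^ 2 + 16 * t ^ 2) ^ (-(5 : ℝ) / 2) := by
  have h1 : HasDerivAt (fun s : ℝ => x ^ 2 + s ^ 2) (2 * y) y := by
    simpa using (hasDerivAt_pow 2 y).const_add (x ^ 2)
  have h2 : HasDerivAt (fun s : ℝ => -2 * s) (-2) y := by
    simpa using (hasDerivAt_id y).const_mul (-2)
  have hP : HasDerivAt (fun s : ℝ => -2 * s * (x ^ 2 + s ^ 2) - 8 * x * t)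
      (-2 * x ^ 2 - 6 * y ^ 2) y := by
    have := (h2.mul h1).sub_const (8 * x * t)
    refine this.congr_deriv ?_; ring
  have hW := (hdw_y x y t).rpow_const (p := -(3 : ℝ) / 2) (Or.inl h)
  have hA := hP.mul hW
  simp only [Pi.mul_def] at hA
  show deriv (fun s => Bf (x, s, t)) y = _
  rw [show (fun s => Bf (x, s, t)) =
      (fun s : ℝ => (-2 * s * (x ^ 2 + s ^ 2) - 8 * x * t) *
        ((x ^ 2 + s ^ 2) ^ 2 + 16 * t ^ 2) ^ (-(3 : ℝ) / 2)) from rfl,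
    hA.deriv, exp_eq3]
  ring

lemma pdt_Bf (x y t : ℝ) (h : (x ^ 2 + y ^ 2) ^ 2 + 16 * t ^ 2 ≠ 0) :
    pdt Bf (x, y, t) =
      -8 * x * ((x ^ 2 + y ^ 2) ^ 2 + 16 * t ^ 2) ^ (-(3 : ℝ) / 2) +
      (-2 * y * (x ^ 2 + y ^ 2) - 8 * x * t) * (-48 * t) *
        ((x ^ 2 + y ^ 2) ^ 2 + 16 * t ^ 2) ^ (-(5 : ℝ) / 2) := by
  have hP : HasDerivAt (fun s : ℝ => -2 * y * (x ^ 2 + y ^ 2) - 8 * x * s) (-8 * x) t := by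
    have hid : HasDerivAt (fun s : ℝ => 8 * x * s) (8 * x) t := by
      simpa using (hasDerivAt_id t).const_mul (8 * x)
    have := hid.const_sub (-2 * y * (x ^ 2 + y ^ 2))
    refine this.congr_deriv ?_
    ring
  have hW := (hdw_t x y t).rpow_const (p := -(3 : ℝ) / 2) (Or.inl h)
  have hA := hP.mul hW
  simp only [Pi.mul_def] at hA
  show deriv (fun s => Bf (x, y, s)) t = _
  rw [show (fun s => Bf (x, y, s)) =
      (fun s : ℝ => (-2 * y * (x ^ 2 + y ^ 2) - 8 * x * s) *
        ((x ^ 2 + y ^ 2) ^ 2 + 16 * s ^ 2) ^ (-(3 : ℝ) / 2)) from rfl,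
    hA.deriv, exp_eq3]
  ring

lemma w_pos_of_ne {x y t : ℝ} (hp : ((x, y, t) : ℝ × ℝ × ℝ) ≠ 0) :
    0 < (x ^ 2 + y ^ 2) ^ 2 + 16 * t ^ 2 := by
  by_contra h
  push_neg at h
  have h0 : (x ^ 2 + y ^ 2) ^ 2 + 16 * t ^ 2 = 0 := le_antisymm h (by positivity)
  have ht2 : t ^ 2 = 0 := by nlinarith [sq_nonneg (x ^ 2 + y ^ 2)]
  have hr2 : (x ^ 2 + y ^ 2) ^ 2 = 0 := by nlinarith
  have hr : x ^ 2 + y ^ 2 = 0 := (pow_eq_zero_iff (two_ne_zero)).mp hr2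
  have hx2 : x ^ 2 = 0 := by nlinarith [sq_nonneg y]
  have hy2 : y ^ 2 = 0 := by nlinarith [sq_nonneg x]
  have ht : t = 0 := (pow_eq_zero_iff (two_ne_zero)).mp ht2
  have hx : x = 0 := (pow_eq_zero_iff (two_ne_zero)).mp hx2
  have hy : y = 0 := (pow_eq_zero_iff (two_ne_zero)).mp hy2
  exact hp (by rw [hx, hy, ht]; rfl)

/-- `G` is `Δ♭`-harmonic away from the origin: `Δ♭ G = X²G + Y²G = 0` on `ℝ³ \ {0}`. -/
theorem kohn_laplacian_G_eq_zero (p : ℝ × ℝ × ℝ) (hp : p ≠ 0) :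
    Xop (fun q => Xop G q) p + Yop (fun q => Yop G q) p = 0 := by
  obtain ⟨x, y, t⟩ := p
  have hwp : 0 < (x ^ 2 + y ^ 2) ^ 2 + 16 * t ^ 2 := w_pos_of_ne hp
  have hw0 : (x ^ 2 + y ^ 2) ^ 2 + 16 * t ^ 2 ≠ 0 := hwp.ne'
  -- eventual nonvanishing along the three coordinate slices
  have hex : ∀ᶠ s in nhds x, (s ^ 2 + y ^ 2) ^ 2 + 16 * t ^ 2 ≠ 0 := by
    have hc : ContinuousAt (fun s : ℝ => (s ^ 2 + y ^ 2) ^ 2 + 16 * t ^ 2) x := by fun_prop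
    exact hc.eventually_ne hw0
  have hey : ∀ᶠ s in nhds y, (x ^ 2 + s ^ 2) ^ 2 + 16 * t ^ 2 ≠ 0 := by
    have hc : ContinuousAt (fun s : ℝ => (x ^ 2 + s ^ 2) ^ 2 + 16 * t ^ 2) y := by fun_prop
    exact hc.eventually_ne hw0
  have het : ∀ᶠ s in nhds t, (x ^ 2 + y ^ 2) ^ 2 + 16 * s ^ 2 ≠ 0 := by
    have hc : ContinuousAt (fun s : ℝ => (x ^ 2 + y ^ 2) ^ 2 + 16 * s ^ 2) t := by fun_prop
    exact hc.eventually_ne hw0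
  have hXx : pdx (fun q => Xop G q) (x, y, t) = pdx Af (x, y, t) := by
    apply Filter.EventuallyEq.deriv_eq
    filter_upwards [hex] with s hs
    exact XG_eq s y t hs
  have hXt : pdt (fun q => Xop G q) (x, y, t) = pdt Af (x, y, t) := by
    apply Filter.EventuallyEq.deriv_eq
    filter_upwards [het] with s hs
    exact XG_eq x y s hs
  have hYy : pdy (fun q => Yop G q) (x, y, t) = pdy Bf (x, y, t) := by
    apply Filter.EventuallyEq.deriv_eq
    filter_upwards [hey] with s hs
    exact YG_eq x s t hs
  have hYt : pdt (fun q => Yop G q) (x, y, t) = pdt Bf (x, y, t) := by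
    apply Filter.EventuallyEq.deriv_eq
    filter_upwards [het] with s hs
    exact YG_eq x y s hs
  have e1 : Xop (fun q => Xop G q) (x, y, t) =
      pdx (fun q => Xop G q) (x, y, t) - y / 2 * pdt (fun q => Xop G q) (x, y, t) := rfl
  have e2 : Yop (fun q => Yop G q) (x, y, t) =
      pdy (fun q => Yop G q) (x, y, t) + x / 2 * pdt (fun q => Yop G q) (x, y, t) := rfl
  rw [e1, e2, hXx, hXt, hYy, hYt, pdx_Af x y t hw0, pdt_Af x y t hw0, pdy_Bf x y t hw0,
    pdt_Bf x y t hw0]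
  have hrel : ((x ^ 2 + y ^ 2) ^ 2 + 16 * t ^ 2) *
      ((x ^ 2 + y ^ 2) ^ 2 + 16 * t ^ 2) ^ (-(5 : ℝ) / 2) =
      ((x ^ 2 + y ^ 2) ^ 2 + 16 * t ^ 2) ^ (-(3 : ℝ) / 2) := by
    have h := Real.rpow_add hwp 1 (-(5 : ℝ) / 2)
    rw [Real.rpow_one] at h
    rw [← h]
    norm_num
  linear_combination (12 * (x ^ 2 + y ^ 2)) * hrel
end
end

section
/- Let Ω ⊂ ℝ³ be an open set, u ∈ C³(Ω) with Δ♭u = 0 on Ω, where Δ♭ = X² + Y² with X = ∂_x - (y/2)∂_t and Y = ∂_y + (x/2)∂_t. Then the pointwise identity (1/2)·X(|∇u|²) = div♭(Xu·∇u) + (Yu)(Tu) holds on Ω, where ∇u = (Xu, Yu), |∇u|² = (Xu)² + (Yu)², T = ∂_t, and div♭(a,b) := Xa + Yb. -/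
noncomputable section

open Filter

section Aux

variable {f g : ℝ × ℝ × ℝ → ℝ} {p : ℝ × ℝ × ℝ}

lemma hasDerivAt_lineX (p : ℝ × ℝ × ℝ) :
    HasDerivAt (fun s : ℝ => ((s, p.2.1, p.2.2) : ℝ × ℝ × ℝ)) (1, 0, 0) p.1 :=
  (hasDerivAt_id p.1).prodMk ((hasDerivAt_const _ _).prodMk (hasDerivAt_const _ _))

lemma hasDerivAt_lineY (p : ℝ × ℝ × ℝ) :
    HasDerivAt (fun s : ℝ => ((p.1, s, p.2.2) : ℝ × ℝ × ℝ)) (0, 1, 0) p.2.1 :=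
  (hasDerivAt_const _ _).prodMk ((hasDerivAt_id _).prodMk (hasDerivAt_const _ _))

lemma hasDerivAt_lineT (p : ℝ × ℝ × ℝ) :
    HasDerivAt (fun s : ℝ => ((p.1, p.2.1, s) : ℝ × ℝ × ℝ)) (0, 0, 1) p.2.2 :=
  (hasDerivAt_const _ _).prodMk ((hasDerivAt_const _ _).prodMk (hasDerivAt_id _))

lemma pdx_eq {f' : ℝ × ℝ × ℝ →L[ℝ] ℝ} (hf : HasFDerivAt f f' p) :
    pdx f p = f' (1, 0, 0) :=
  (hf.comp_hasDerivAt_of_eq p.1 (hasDerivAt_lineX p) rfl).deriv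

lemma pdy_eq {f' : ℝ × ℝ × ℝ →L[ℝ] ℝ} (hf : HasFDerivAt f f' p) :
    pdy f p = f' (0, 1, 0) :=
  (hf.comp_hasDerivAt_of_eq p.2.1 (hasDerivAt_lineY p) rfl).deriv

lemma pdt_eq {f' : ℝ × ℝ × ℝ →L[ℝ] ℝ} (hf : HasFDerivAt f f' p) :
    pdt f p = f' (0, 0, 1) :=
  (hf.comp_hasDerivAt_of_eq p.2.2 (hasDerivAt_lineT p) rfl).deriv

lemma sliceX_hasDerivAt (hf : DifferentiableAt ℝ f p) :
    HasDerivAt (fun s => f (s, p.2.1, p.2.2)) (fderiv ℝ f p (1, 0, 0)) p.1 :=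
  hf.hasFDerivAt.comp_hasDerivAt_of_eq p.1 (hasDerivAt_lineX p) rfl

lemma sliceY_hasDerivAt (hf : DifferentiableAt ℝ f p) :
    HasDerivAt (fun s => f (p.1, s, p.2.2)) (fderiv ℝ f p (0, 1, 0)) p.2.1 :=
  hf.hasFDerivAt.comp_hasDerivAt_of_eq p.2.1 (hasDerivAt_lineY p) rfl

lemma sliceT_hasDerivAt (hf : DifferentiableAt ℝ f p) :
    HasDerivAt (fun s => f (p.1, p.2.1, s)) (fderiv ℝ f p (0, 0, 1)) p.2.2 :=
  hf.hasFDerivAt.comp_hasDerivAt_of_eq p.2.2 (hasDerivAt_lineT p) rfl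

lemma pdx_mul (hf : DifferentiableAt ℝ f p) (hg : DifferentiableAt ℝ g p) :
    pdx (fun q => f q * g q) p = pdx f p * g p + f p * pdx g p := by
  have H := ((sliceX_hasDerivAt hf).mul (sliceX_hasDerivAt hg)).deriv
  simp only [Pi.mul_def] at H
  rw [pdx, H, pdx_eq hf.hasFDerivAt, pdx_eq hg.hasFDerivAt]

lemma pdy_mul (hf : DifferentiableAt ℝ f p) (hg : DifferentiableAt ℝ g p) :
    pdy (fun q => f q * g q) p = pdy f p * g p + f p * pdy g p := by
  have H := ((sliceY_hasDerivAt hf).mul (sliceY_hasDerivAt hg)).deriv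
  simp only [Pi.mul_def] at H
  rw [pdy, H, pdy_eq hf.hasFDerivAt, pdy_eq hg.hasFDerivAt]

lemma pdt_mul (hf : DifferentiableAt ℝ f p) (hg : DifferentiableAt ℝ g p) :
    pdt (fun q => f q * g q) p = pdt f p * g p + f p * pdt g p := by
  have H := ((sliceT_hasDerivAt hf).mul (sliceT_hasDerivAt hg)).deriv
  simp only [Pi.mul_def] at H
  rw [pdt, H, pdt_eq hf.hasFDerivAt, pdt_eq hg.hasFDerivAt]

lemma Xop_mul (hf : DifferentiableAt ℝ f p) (hg : DifferentiableAt ℝ g p) :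
    Xop (fun q => f q * g q) p = Xop f p * g p + f p * Xop g p := by
  simp only [Xop, pdx_mul hf hg, pdt_mul hf hg]; ring

lemma Yop_mul (hf : DifferentiableAt ℝ f p) (hg : DifferentiableAt ℝ g p) :
    Yop (fun q => f q * g q) p = Yop f p * g p + f p * Yop g p := by
  simp only [Yop, pdy_mul hf hg, pdt_mul hf hg]; ring

lemma pdx_add (hf : DifferentiableAt ℝ f p) (hg : DifferentiableAt ℝ g p) :
    pdx (fun q => f q + g q) p = pdx f p + pdx g p := by
  have H := ((sliceX_hasDerivAt hf).add (sliceX_hasDerivAt hg)).deriv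
  simp only [Pi.add_def] at H
  rw [pdx, H, pdx_eq hf.hasFDerivAt, pdx_eq hg.hasFDerivAt]

lemma pdt_add (hf : DifferentiableAt ℝ f p) (hg : DifferentiableAt ℝ g p) :
    pdt (fun q => f q + g q) p = pdt f p + pdt g p := by
  have H := ((sliceT_hasDerivAt hf).add (sliceT_hasDerivAt hg)).deriv
  simp only [Pi.add_def] at H
  rw [pdt, H, pdt_eq hf.hasFDerivAt, pdt_eq hg.hasFDerivAt]

lemma Xop_add (hf : DifferentiableAt ℝ f p) (hg : DifferentiableAt ℝ g p) :
    Xop (fun q => f q + g q) p = Xop f p + Xop g p := by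
  simp only [Xop, pdx_add hf hg, pdt_add hf hg]; ring

lemma pdx_congr (h : f =ᶠ[nhds p] g) : pdx f p = pdx g p := by
  apply Filter.EventuallyEq.deriv_eq
  have hc : ContinuousAt (fun s : ℝ => ((s, p.2.1, p.2.2) : ℝ × ℝ × ℝ)) p.1 := by fun_prop
  exact h.comp_tendsto hc

lemma pdy_congr (h : f =ᶠ[nhds p] g) : pdy f p = pdy g p := by
  apply Filter.EventuallyEq.deriv_eq
  have hc : ContinuousAt (fun s : ℝ => ((p.1, s, p.2.2) : ℝ × ℝ × ℝ)) p.2.1 := by fun_prop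
  exact h.comp_tendsto hc

lemma pdt_congr (h : f =ᶠ[nhds p] g) : pdt f p = pdt g p := by
  apply Filter.EventuallyEq.deriv_eq
  have hc : ContinuousAt (fun s : ℝ => ((p.1, p.2.1, s) : ℝ × ℝ × ℝ)) p.2.2 := by fun_prop
  exact h.comp_tendsto hc

lemma Xop_congr (h : f =ᶠ[nhds p] g) : Xop f p = Xop g p := by
  rw [Xop, Xop, pdx_congr h, pdt_congr h]

lemma Yop_congr (h : f =ᶠ[nhds p] g) : Yop f p = Yop g p := by
  rw [Yop, Yop, pdy_congr h, pdt_congr h]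

end Aux

/-- Pointwise Rellich-type identity for `Δ♭`-harmonic functions:
`(1/2)·X(|∇u|²) = div♭(Xu·∇u) + (Yu)(Tu)` on `Ω`, where
`div♭(Xu·∇u) = X(Xu·Xu) + Y(Xu·Yu)`. -/
theorem rellich_pointwise (Ω : Set (ℝ × ℝ × ℝ)) (hΩ : IsOpen Ω)
    (u : ℝ × ℝ × ℝ → ℝ) (hu : ContDiffOn ℝ 3 u Ω)
    (hharm : ∀ p ∈ Ω, Xop (fun q => Xop u q) p + Yop (fun q => Yop u q) p = 0) :
    ∀ p ∈ Ω,
      (1 / 2) * Xop (fun q => (Xop u q) ^ 2 + (Yop u q) ^ 2) p =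
        (Xop (fun q => Xop u q * Xop u q) p + Yop (fun q => Xop u q * Yop u q) p)
          + Yop u p * pdt u p := by
  intro p hp
  have hmem : Ω ∈ nhds p := hΩ.mem_nhds hp
  set F : ℝ × ℝ × ℝ → (ℝ × ℝ × ℝ →L[ℝ] ℝ) := fderiv ℝ u with hFdef
  have hF2 : ContDiffAt ℝ 2 F p := (hu.contDiffAt hmem).fderiv_right (by norm_num)
  have hFd : DifferentiableAt ℝ F p := hF2.differentiableAt (by norm_num)
  set B : ℝ × ℝ × ℝ →L[ℝ] (ℝ × ℝ × ℝ →L[ℝ] ℝ) := fderiv ℝ F p with hBdef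
  have hB : HasFDerivAt F B p := hFd.hasFDerivAt
  -- eventual fderiv of u
  have hFev : ∀ᶠ q in nhds p, HasFDerivAt u (F q) q := by
    filter_upwards [hΩ.mem_nhds hp] with q hq
    exact ((hu.contDiffAt (hΩ.mem_nhds hq)).differentiableAt (by norm_num)).hasFDerivAt
  have hsymm : ∀ v w, B v w = B w v := second_derivative_symmetric_of_eventually hFev hB
  -- eventual expressions for Xop u, Yop u
  set g1 : ℝ × ℝ × ℝ → ℝ := fun q => F q (1, 0, 0) - q.2.1 / 2 * F q (0, 0, 1) with hg1def
  set g2 : ℝ × ℝ × ℝ → ℝ := fun q => F q (0, 1, 0) + q.1 / 2 * F q (0, 0, 1) with hg2def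
  have heq1 : Xop u =ᶠ[nhds p] g1 := by
    filter_upwards [hFev] with q hq
    rw [Xop, pdx_eq hq, pdt_eq hq]
  have heq2 : Yop u =ᶠ[nhds p] g2 := by
    filter_upwards [hFev] with q hq
    rw [Yop, pdy_eq hq, pdt_eq hq]
  -- differentiability of g1, g2 at p
  have hc1 : DifferentiableAt ℝ (fun q : ℝ × ℝ × ℝ => F q (1, 0, 0)) p :=
    hFd.clm_apply (differentiableAt_const _)
  have hc2 : DifferentiableAt ℝ (fun q : ℝ × ℝ × ℝ => F q (0, 1, 0)) p :=
    hFd.clm_apply (differentiableAt_const _)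
  have hc3 : DifferentiableAt ℝ (fun q : ℝ × ℝ × ℝ => F q (0, 0, 1)) p :=
    hFd.clm_apply (differentiableAt_const _)
  have hy2 : DifferentiableAt ℝ (fun q : ℝ × ℝ × ℝ => q.2.1) p :=
    differentiableAt_snd.fst
  have hx1 : DifferentiableAt ℝ (fun q : ℝ × ℝ × ℝ => q.1) p := differentiableAt_fst
  have hy2' : DifferentiableAt ℝ (fun q : ℝ × ℝ × ℝ => q.2.1 / 2) p := by fun_prop
  have hx1' : DifferentiableAt ℝ (fun q : ℝ × ℝ × ℝ => q.1 / 2) p := by fun_prop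
  have hg1d : DifferentiableAt ℝ g1 p := hc1.sub (hy2'.mul hc3)
  have hg2d : DifferentiableAt ℝ g2 p := hc2.add (hx1'.mul hc3)
  have hXud : DifferentiableAt ℝ (Xop u) p := heq1.differentiableAt_iff.mpr hg1d
  have hYud : DifferentiableAt ℝ (Yop u) p := heq2.differentiableAt_iff.mpr hg2d
  -- slices of F
  have HFX : HasDerivAt (fun s => F (s, p.2.1, p.2.2)) (B (1, 0, 0)) p.1 :=
    hB.comp_hasDerivAt_of_eq p.1 (hasDerivAt_lineX p) rfl
  have HFY : HasDerivAt (fun s => F (p.1, s, p.2.2)) (B (0, 1, 0)) p.2.1 :=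
    hB.comp_hasDerivAt_of_eq p.2.1 (hasDerivAt_lineY p) rfl
  have HFT : HasDerivAt (fun s => F (p.1, p.2.1, s)) (B (0, 0, 1)) p.2.2 :=
    hB.comp_hasDerivAt_of_eq p.2.2 (hasDerivAt_lineT p) rfl
  -- slice derivatives of clm applications
  have HFX1 : ∀ v : ℝ × ℝ × ℝ, HasDerivAt (fun s => F (s, p.2.1, p.2.2) v) (B (1, 0, 0) v) p.1 := by
    intro v
    have := HFX.clm_apply (hasDerivAt_const p.1 v)
    simpa using this
  have HFY1 : ∀ v : ℝ × ℝ × ℝ, HasDerivAt (fun s => F (p.1, s, p.2.2) v) (B (0, 1, 0) v) p.2.1 := by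
    intro v
    have := HFY.clm_apply (hasDerivAt_const p.2.1 v)
    simpa using this
  have HFT1 : ∀ v : ℝ × ℝ × ℝ, HasDerivAt (fun s => F (p.1, p.2.1, s) v) (B (0, 0, 1) v) p.2.2 := by
    intro v
    have := HFT.clm_apply (hasDerivAt_const p.2.2 v)
    simpa using this
  -- second-order partial derivatives of g1 and g2
  have pdy_g1 : pdy g1 p
      = B (0, 1, 0) (1, 0, 0) - (1 / 2 * F p (0, 0, 1) + p.2.1 / 2 * B (0, 1, 0) (0, 0, 1)) := by
    have h : HasDerivAt (fun s => g1 (p.1, s, p.2.2))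
        (B (0, 1, 0) (1, 0, 0) - (1 / 2 * F p (0, 0, 1) + p.2.1 / 2 * B (0, 1, 0) (0, 0, 1)))
        p.2.1 := by
      have hs : HasDerivAt (fun s : ℝ => s / 2) (1 / 2) p.2.1 := by
        simpa using (hasDerivAt_id p.2.1).div_const 2
      have := (HFY1 (1, 0, 0)).sub (hs.mul (HFY1 (0, 0, 1)))
      simpa [hg1def, Pi.sub_def, Pi.mul_def] using this
    exact h.deriv
  have pdt_g1 : pdt g1 p
      = B (0, 0, 1) (1, 0, 0) - p.2.1 / 2 * B (0, 0, 1) (0, 0, 1) := by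
    have h : HasDerivAt (fun s => g1 (p.1, p.2.1, s))
        (B (0, 0, 1) (1, 0, 0) - p.2.1 / 2 * B (0, 0, 1) (0, 0, 1)) p.2.2 := by
      have := (HFT1 (1, 0, 0)).sub ((HFT1 (0, 0, 1)).const_mul (p.2.1 / 2))
      simpa [hg1def, Pi.sub_def, Pi.mul_def] using this
    exact h.deriv
  have pdx_g2 : pdx g2 p
      = B (1, 0, 0) (0, 1, 0) + (1 / 2 * F p (0, 0, 1) + p.1 / 2 * B (1, 0, 0) (0, 0, 1)) := by
    have h : HasDerivAt (fun s => g2 (s, p.2.1, p.2.2))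
        (B (1, 0, 0) (0, 1, 0) + (1 / 2 * F p (0, 0, 1) + p.1 / 2 * B (1, 0, 0) (0, 0, 1)))
        p.1 := by
      have hs : HasDerivAt (fun s : ℝ => s / 2) (1 / 2) p.1 := by
        simpa using (hasDerivAt_id p.1).div_const 2
      have := (HFX1 (0, 1, 0)).add (hs.mul (HFX1 (0, 0, 1)))
      simpa [hg2def, Pi.add_def, Pi.mul_def] using this
    exact h.deriv
  have pdt_g2 : pdt g2 p
      = B (0, 0, 1) (0, 1, 0) + p.1 / 2 * B (0, 0, 1) (0, 0, 1) := by
    have h : HasDerivAt (fun s => g2 (p.1, p.2.1, s))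
        (B (0, 0, 1) (0, 1, 0) + p.1 / 2 * B (0, 0, 1) (0, 0, 1)) p.2.2 := by
      have := (HFT1 (0, 1, 0)).add ((HFT1 (0, 0, 1)).const_mul (p.1 / 2))
      simpa [hg2def, Pi.add_def, Pi.mul_def] using this
    exact h.deriv
  -- the commutator identity: Xop (Yop u) - Yop (Xop u) = pdt u
  have hXY : Xop (fun q => Yop u q) p = Xop g2 p := Xop_congr heq2
  have hYX : Yop (fun q => Xop u q) p = Yop g1 p := Yop_congr heq1
  have hXX : Xop (fun q => Xop u q) p = Xop g1 p := Xop_congr heq1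
  have hYY : Yop (fun q => Yop u q) p = Yop g2 p := Yop_congr heq2
  have hpdtu : pdt u p = F p (0, 0, 1) := pdt_eq hFev.self_of_nhds
  have hcomm : Xop (fun q => Yop u q) p - Yop (fun q => Xop u q) p = pdt u p := by
    rw [hXY, hYX, hpdtu, Xop, Yop, pdx_g2, pdt_g2, pdy_g1, pdt_g1,
      hsymm (0, 0, 1) (1, 0, 0), hsymm (0, 0, 1) (0, 1, 0), hsymm (0, 1, 0) (1, 0, 0)]
    ring
  have hharm' : Xop (fun q => Xop u q) p + Yop (fun q => Yop u q) p = 0 := hharm p hp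
  -- expand the products
  have hsq : (fun q => (Xop u q) ^ 2 + (Yop u q) ^ 2)
      = fun q => Xop u q * Xop u q + Yop u q * Yop u q := by
    funext q; ring
  rw [hsq, Xop_add (f := fun q => Xop u q * Xop u q) (g := fun q => Yop u q * Yop u q) (hXud.mul hXud) (hYud.mul hYud), Xop_mul hXud hXud, Xop_mul hYud hYud, Yop_mul hXud hYud]
  -- pure algebra now
  have e1 : Xop (fun q => Yop u q) p = Yop (fun q => Xop u q) p + pdt u p := by
    linarith [hcomm]
  have e2 : Yop (fun q => Yop u q) p = -Xop (fun q => Xop u q) p := by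
    linarith [hharm']
  rw [e1, e2]
  ring
end
end

section
/- Let B be a Banach space, V a normed space, and {T_s}_{s∈[0,1]} a family of bounded linear operators B → V such that: (a) there is c > 0 with ‖T_s f‖_V ≥ c‖f‖_B for all f ∈ B and s ∈ [0,1]; (b) s ↦ T_s is continuous from [0,1] to the operator norm topology on B(B,V); (c) T_0 is surjective. Then T_1 is surjective. -/
open Set

/-- One step: if `Ts` is surjective and bounded below, and `Tt` is close to `Ts`,
then `Tt` is surjective. -/
theorem method_of_continuity_step {B V : Type*}
    [NormedAddCommGroup B] [NormedSpace ℝ B] [CompleteSpace B]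
    [NormedAddCommGroup V] [NormedSpace ℝ V] [CompleteSpace V]
    (Ts Tt : B →L[ℝ] V) (c : ℝ) (hc : 0 < c)
    (hlows : ∀ f : B, c * ‖f‖ ≤ ‖Ts f‖)
    (hst : ‖Tt - Ts‖ < c) (hs : Function.Surjective Ts) :
    Function.Surjective Tt := by
  have hker : LinearMap.ker (Ts : B →ₗ[ℝ] V) = ⊥ := by
    rw [LinearMap.ker_eq_bot']
    intro f hf
    have := hlows f
    rw [show Ts f = 0 from hf, norm_zero] at this
    have : ‖f‖ ≤ 0 := nonpos_of_mul_nonpos_right (le_trans (by nlinarith [norm_nonneg f]) this) hc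
    simpa using le_antisymm this (norm_nonneg f)
  have hrange : LinearMap.range (Ts : B →ₗ[ℝ] V) = ⊤ := LinearMap.range_eq_top.mpr hs
  let e := ContinuousLinearEquiv.ofBijective Ts hker hrange
  have hsymm : ∀ v : V, ‖e.symm v‖ ≤ c⁻¹ * ‖v‖ := by
    intro v
    have h1 : c * ‖e.symm v‖ ≤ ‖Ts (e.symm v)‖ := hlows _
    have h2 : Ts (e.symm v) = v := e.apply_symm_apply v
    rw [h2] at h1
    rw [← mul_le_mul_iff_right₀ hc, ← mul_assoc, mul_inv_cancel₀ hc.ne', one_mul]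
    exact h1
  intro g
  set Φ : B → B := fun f => e.symm (g + (Ts - Tt) f) with hΦ
  have hK0 : (0:ℝ) ≤ c⁻¹ * ‖Tt - Ts‖ := by positivity
  set K : NNReal := ⟨c⁻¹ * ‖Tt - Ts‖, hK0⟩ with hKdef
  have hK1 : K < 1 := by
    rw [← NNReal.coe_lt_coe]
    show c⁻¹ * ‖Tt - Ts‖ < 1
    calc c⁻¹ * ‖Tt - Ts‖ < c⁻¹ * c := by
          exact mul_lt_mul_of_pos_left hst (inv_pos.mpr hc)
      _ = 1 := inv_mul_cancel₀ hc.ne'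
  have hlip : LipschitzWith K Φ := by
    intro f f'
    rw [edist_dist, edist_dist, dist_eq_norm, dist_eq_norm]
    have key : Φ f - Φ f' = e.symm ((Ts - Tt) (f - f')) := by
      rw [hΦ]
      simp only [← e.symm.map_sub]
      congr 1
      simp only [map_sub, ContinuousLinearMap.sub_apply]
      abel
    rw [← ENNReal.ofReal_coe_nnreal, ← ENNReal.ofReal_mul (by positivity)]
    apply ENNReal.ofReal_le_ofReal
    rw [key]
    calc ‖e.symm ((Ts - Tt) (f - f'))‖ ≤ c⁻¹ * ‖(Ts - Tt) (f - f')‖ := hsymm _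
      _ ≤ c⁻¹ * (‖Ts - Tt‖ * ‖f - f'‖) := by
          apply mul_le_mul_of_nonneg_left ((Ts - Tt).le_opNorm _) (by positivity)
      _ = (K : ℝ) * ‖f - f'‖ := by
          rw [hKdef]
          change c⁻¹ * (‖Ts - Tt‖ * ‖f - f'‖) = (c⁻¹ * ‖Tt - Ts‖) * ‖f - f'‖
          rw [norm_sub_rev Ts Tt]
          ring
  have hcontr : ContractingWith K Φ := ⟨hK1, hlip⟩
  have : Nonempty B := ⟨0⟩
  obtain ⟨f, hfix⟩ : ∃ f : B, Φ f = f := ⟨hcontr.fixedPoint Φ, hcontr.fixedPoint_isFixedPt⟩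
  refine ⟨f, ?_⟩
  have := congrArg e hfix
  rw [hΦ] at this
  simp only [e.apply_symm_apply] at this
  have he : e f = Ts f := rfl
  rw [he, ContinuousLinearMap.sub_apply] at this
  have hg := eq_sub_of_add_eq this
  rw [sub_sub_cancel] at hg
  exact hg.symm

/-- The method of continuity: if `{T_s}` is an operator-norm continuous family of bounded
operators from a Banach space `B` to a normed space `V`, uniformly bounded from below,
and `T_0` is surjective, then `T_1` is surjective. -/
theorem method_of_continuity {B V : Type*}
    [NormedAddCommGroup B] [NormedSpace ℝ B] [CompleteSpace B]
    [NormedAddCommGroup V] [NormedSpace ℝ V]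
    (T : ℝ → B →L[ℝ] V)
    (c : ℝ) (hc : 0 < c)
    (hlow : ∀ s ∈ Icc (0 : ℝ) 1, ∀ f : B, c * ‖f‖ ≤ ‖T s f‖)
    (hcont : ContinuousOn T (Icc (0 : ℝ) 1))
    (hsurj : Function.Surjective (T 0)) :
    Function.Surjective (T 1) := by
  -- V is complete
  have hcV : CompleteSpace V := by
    have ha : AntilipschitzWith ⟨c⁻¹, by positivity⟩ (T 0) := by
      apply AntilipschitzWith.of_le_mul_dist
      intro x y
      simp only [dist_eq_norm, NNReal.coe_mk]
      have := hlow 0 (by norm_num) (x - y)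
      rw [map_sub] at this
      change ‖x - y‖ ≤ c⁻¹ * ‖(T 0) x - (T 0) y‖
      rw [← mul_le_mul_iff_right₀ hc, ← mul_assoc, mul_inv_cancel₀ hc.ne', one_mul]
      exact this
    rw [completeSpace_iff_isComplete_univ]
    have h := ha.isComplete_range (T 0).uniformContinuous
    rwa [Set.range_eq_univ.mpr hsurj] at h
  -- uniform continuity gives a uniform step size δ
  obtain ⟨δ, hδ, hu⟩ : ∃ δ > 0, ∀ s ∈ Icc (0:ℝ) 1, ∀ t ∈ Icc (0:ℝ) 1,
      dist s t < δ → ‖T t - T s‖ < c := by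
    have hu := isCompact_Icc.uniformContinuousOn_of_continuous hcont
    obtain ⟨δ, hδ, h⟩ := Metric.uniformContinuousOn_iff.mp hu c hc
    exact ⟨δ, hδ, fun s hs t ht hst => by
      have := h t ht s hs (by rwa [dist_comm])
      rwa [dist_eq_norm] at this⟩
  -- step lemma specialized
  have step : ∀ s ∈ Icc (0:ℝ) 1, ∀ t ∈ Icc (0:ℝ) 1, dist s t < δ →
      Function.Surjective (T s) → Function.Surjective (T t) := by
    intro s hs t ht hst hsurjs
    exact method_of_continuity_step (T s) (T t) c hc (hlow s hs) (hu s hs t ht hst) hsurjs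
  -- the set of parameters with surjective operator
  set A : Set ℝ := {s | s ∈ Icc (0:ℝ) 1 ∧ Function.Surjective (T s)} with hA
  have h0A : (0:ℝ) ∈ A := ⟨by norm_num, hsurj⟩
  have hAne : A.Nonempty := ⟨0, h0A⟩
  have hAbdd : BddAbove A := ⟨1, fun x hx => hx.1.2⟩
  set a := sSup A with ha
  have haIcc : a ∈ Icc (0:ℝ) 1 := by
    constructor
    · exact le_csSup hAbdd h0A
    · exact csSup_le hAne fun x hx => hx.1.2
  have haA : a ∈ A := by
    obtain ⟨s, hsA, hsa⟩ := exists_lt_of_lt_csSup hAne (show a - δ < sSup A by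
      rw [← ha]; linarith)
    have hsle : s ≤ a := le_csSup hAbdd hsA
    have hd : dist s a < δ := by
      rw [Real.dist_eq, abs_of_nonpos (by linarith)]
      linarith
    exact ⟨haIcc, step s hsA.1 a haIcc hd hsA.2⟩
  have ha1 : a = 1 := by
    by_contra hne
    have halt : a < 1 := lt_of_le_of_ne haIcc.2 hne
    set t := min (a + δ/2) 1 with htdef
    have htIcc : t ∈ Icc (0:ℝ) 1 := ⟨le_min (by linarith [haIcc.1]) (by norm_num), min_le_right _ _⟩
    have hat : a < t := lt_min (by linarith) halt
    have hd : dist a t < δ := by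
      rw [Real.dist_eq, abs_of_nonpos (by linarith)]
      have : t ≤ a + δ/2 := min_le_left _ _
      linarith
    have htA : t ∈ A := ⟨htIcc, step a haIcc t htIcc hd haA.2⟩
    have : t ≤ a := le_csSup hAbdd htA
    linarith
  rw [← ha1]
  exact haA.2
end
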